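/- For 0 < p < 1/2 and 0 ≤ e ≤ 1, the function D(x) = H(x*p) - (1-e)·H(x) - H(p) is convex on [0,1] if and only if e ≤ 4p(1-p). -/

import Mathlib

open Real Set

/-- Binary entropy function (base 2). -/
noncomputable def binH (t : ℝ) : ℝ := -(t * Real.logb 2 t) - (1 - t) * Real.logb 2 (1 - t)

/-- Binary convolution x*p = x(1-p)+p(1-x). -/
def bconv (x p : ℝ) : ℝ := x * (1 - p) + p * (1 - x)

/-- D(x) = H(x*p) - (1-e) H(x) - H(p). -/
noncomputable def Dfun (p e x : ℝ) : ℝ := binH (bconv x p) - (1 - e) * binH x - binH p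

namespace Stmt11Aux

open Filter Topology

/-- natural-log version of the entropy kernel -/
noncomputable def phi (t : ℝ) : ℝ := t * Real.log t + (1 - t) * Real.log (1 - t)

lemma binH_eq (t : ℝ) : binH t = (Real.log 2)⁻¹ * (-phi t) := by
  unfold binH phi Real.logb; ring

lemma continuous_phi : Continuous phi := by
  have h1 : Continuous fun t : ℝ => t * Real.log t := Real.continuous_mul_log
  have h2 : Continuous fun t : ℝ => (1 - t) * Real.log (1 - t) :=
    h1.comp (continuous_const.sub continuous_id)
  exact h1.add h2

lemma continuous_binH : Continuous binH := by
  have : binH = fun t => (Real.log 2)⁻¹ * (-phi t) := funext binH_eq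
  rw [this]
  exact continuous_const.mul continuous_phi.neg

lemma hasDerivAt_phi {t : ℝ} (h0 : 0 < t) (h1 : t < 1) :
    HasDerivAt phi (Real.log t - Real.log (1 - t)) t := by
  have h1' : (0 : ℝ) < 1 - t := by linarith
  have hA : HasDerivAt (fun u : ℝ => u * Real.log u) (Real.log t + 1) t :=
    Real.hasDerivAt_mul_log (ne_of_gt h0)
  have hinner : HasDerivAt (fun u : ℝ => 1 - u) (-1) t := by
    simpa using (hasDerivAt_id' t).const_sub (1 : ℝ)
  have hB : HasDerivAt (fun u : ℝ => (1 - u) * Real.log (1 - u))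
      ((Real.log (1 - t) + 1) * (-1)) t :=
    (Real.hasDerivAt_mul_log (ne_of_gt h1')).comp t hinner
  have := hA.add hB
  exact this.congr_deriv (by ring)

noncomputable def psi (t : ℝ) : ℝ := Real.log t - Real.log (1 - t)

lemma hasDerivAt_psi {t : ℝ} (h0 : 0 < t) (h1 : t < 1) :
    HasDerivAt psi (1 / (t * (1 - t))) t := by
  have h1' : (0 : ℝ) < 1 - t := by linarith
  have hinner : HasDerivAt (fun u : ℝ => 1 - u) (-1) t := by
    simpa using (hasDerivAt_id' t).const_sub (1 : ℝ)
  have hA : HasDerivAt (fun u : ℝ => Real.log u) t⁻¹ t := Real.hasDerivAt_log (ne_of_gt h0)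
  have hB : HasDerivAt (fun u : ℝ => Real.log (1 - u)) ((1 - t)⁻¹ * (-1)) t :=
    (Real.hasDerivAt_log (ne_of_gt h1')).comp t hinner
  have := hA.sub hB
  exact this.congr_deriv (by field_simp; ring)

lemma hasDerivAt_bconv (p x : ℝ) : HasDerivAt (fun x => bconv x p) (1 - 2 * p) x := by
  have h : HasDerivAt (fun x : ℝ => x * (1 - p) + p * (1 - x))
      (1 * (1 - p) + p * (0 - 1)) x := by
    exact ((hasDerivAt_id x).mul_const (1 - p)).add
      (((hasDerivAt_const x (1 : ℝ)).sub (hasDerivAt_id x)).const_mul p)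
  have h2 : (1 : ℝ) * (1 - p) + p * (0 - 1) = 1 - 2 * p := by ring
  rw [h2] at h
  exact h

lemma bconv_mem {p x : ℝ} (hp0 : 0 < p) (hp1 : p < 1 / 2) (hx : x ∈ Ioo (0 : ℝ) 1) :
    bconv x p ∈ Ioo (0 : ℝ) 1 := by
  obtain ⟨hx0, hx1⟩ := hx
  constructor
  · unfold bconv; nlinarith
  · unfold bconv; nlinarith

/-- first derivative of `Dfun p e` -/
noncomputable def D1 (p e x : ℝ) : ℝ :=
  (Real.log 2)⁻¹ * ((1 - e) * psi x - (1 - 2 * p) * psi (bconv x p))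

/-- second derivative of `Dfun p e` -/
noncomputable def D2 (p e x : ℝ) : ℝ :=
  (Real.log 2)⁻¹ * ((1 - e) * (1 / (x * (1 - x))) -
    (1 - 2 * p) ^ 2 * (1 / (bconv x p * (1 - bconv x p))))

lemma Dfun_repr (p e : ℝ) :
    (fun x => Dfun p e x) =
      fun x => (Real.log 2)⁻¹ * ((1 - e) * phi x - phi (bconv x p)) - binH p := by
  funext x
  simp only [Dfun, binH_eq]
  ring

lemma hasDerivAt_Dfun {p e x : ℝ} (hp0 : 0 < p) (hp1 : p < 1 / 2)
    (hx : x ∈ Ioo (0 : ℝ) 1) :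
    HasDerivAt (fun x => Dfun p e x) (D1 p e x) x := by
  obtain ⟨hy0, hy1⟩ := bconv_mem hp0 hp1 hx
  obtain ⟨hx0, hx1⟩ := hx
  rw [Dfun_repr]
  have h1 : HasDerivAt (fun x : ℝ => phi (bconv x p))
      ((Real.log (bconv x p) - Real.log (1 - bconv x p)) * (1 - 2 * p)) x :=
    by have := (hasDerivAt_phi hy0 hy1).comp x (hasDerivAt_bconv p x); exact this
  have h2 : HasDerivAt (fun x : ℝ => (1 - e) * phi x - phi (bconv x p))
      ((1 - e) * (Real.log x - Real.log (1 - x)) -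
        (Real.log (bconv x p) - Real.log (1 - bconv x p)) * (1 - 2 * p)) x :=
    ((hasDerivAt_phi hx0 hx1).const_mul (1 - e)).sub h1
  have h3 := (h2.const_mul ((Real.log 2)⁻¹)).sub_const (binH p)
  exact h3.congr_deriv (by unfold D1 psi; ring)

lemma hasDerivAt_D1 {p e x : ℝ} (hp0 : 0 < p) (hp1 : p < 1 / 2)
    (hx : x ∈ Ioo (0 : ℝ) 1) :
    HasDerivAt (D1 p e) (D2 p e x) x := by
  obtain ⟨hy0, hy1⟩ := bconv_mem hp0 hp1 hx
  obtain ⟨hx0, hx1⟩ := hx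
  have h1 : HasDerivAt (fun x : ℝ => psi (bconv x p))
      (1 / (bconv x p * (1 - bconv x p)) * (1 - 2 * p)) x :=
    by have := (hasDerivAt_psi hy0 hy1).comp x (hasDerivAt_bconv p x); exact this
  have h2 : HasDerivAt (fun x : ℝ => (1 - e) * psi x - (1 - 2 * p) * psi (bconv x p))
      ((1 - e) * (1 / (x * (1 - x))) -
        (1 - 2 * p) * (1 / (bconv x p * (1 - bconv x p)) * (1 - 2 * p))) x :=
    ((hasDerivAt_psi hx0 hx1).const_mul (1 - e)).sub (h1.const_mul (1 - 2 * p))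
  have h3 := h2.const_mul ((Real.log 2)⁻¹)
  exact h3.congr_deriv (by unfold D2; ring)

lemma key_ineq {p e x : ℝ} (hp0 : 0 < p) (hp1 : p < 1 / 2) (he0 : 0 ≤ e)
    (he4 : e ≤ 4 * p * (1 - p)) (hx : x ∈ Ioo (0 : ℝ) 1) :
    (1 - 2 * p) ^ 2 * (x * (1 - x)) ≤ (1 - e) * (bconv x p * (1 - bconv x p)) := by
  obtain ⟨hx0, hx1⟩ := hx
  have hq : (0 : ℝ) ≤ 1/4 - x * (1 - x) := by nlinarith [sq_nonneg (2 * x - 1)]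
  have h1 : (0 : ℝ) ≤ e * (1 - 2 * p) ^ 2 * (1/4 - x * (1 - x)) :=
    mul_nonneg (mul_nonneg he0 (sq_nonneg _)) hq
  unfold bconv
  nlinarith [h1, sq_nonneg (1 - 2 * p)]

lemma D2_nonneg {p e x : ℝ} (hp0 : 0 < p) (hp1 : p < 1 / 2) (he0 : 0 ≤ e) (he1 : e ≤ 1)
    (he4 : e ≤ 4 * p * (1 - p)) (hx : x ∈ Ioo (0 : ℝ) 1) :
    0 ≤ D2 p e x := by
  obtain ⟨hy0, hy1⟩ := bconv_mem hp0 hp1 hx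
  obtain ⟨hx0, hx1⟩ := hx
  have hA : (0 : ℝ) < x * (1 - x) := by nlinarith
  have hB : (0 : ℝ) < bconv x p * (1 - bconv x p) := by nlinarith
  have hkey := key_ineq hp0 hp1 he0 he4 ⟨hx0, hx1⟩
  have hdiv : (1 - 2 * p) ^ 2 / (bconv x p * (1 - bconv x p)) ≤ (1 - e) / (x * (1 - x)) :=
    (div_le_div_iff₀ hB hA).2 (by linarith)
  have hl : (0 : ℝ) < (Real.log 2)⁻¹ := inv_pos.2 (Real.log_pos one_lt_two)
  unfold D2
  apply mul_nonneg hl.le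
  rw [mul_one_div, mul_one_div]
  linarith

/-- The derivative of a function monotone on `Ioo 0 1` is nonneg at interior points. -/
lemma mono_deriv_nonneg {g : ℝ → ℝ} {c x₀ : ℝ} (hm : MonotoneOn g (Ioo (0 : ℝ) 1))
    (hx : x₀ ∈ Ioo (0 : ℝ) 1) (hd : HasDerivAt g c x₀) : 0 ≤ c := by
  rw [hasDerivAt_iff_tendsto_slope] at hd
  have ht : Tendsto (slope g x₀) (𝓝[>] x₀) (𝓝 c) :=
    hd.mono_left (nhdsWithin_mono _ fun y hy => ne_of_gt hy)
  refine ge_of_tendsto ht ?_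
  filter_upwards [Ioo_mem_nhdsGT_of_mem ⟨le_refl x₀, hx.2⟩] with y hy
  have hyI : y ∈ Ioo (0 : ℝ) 1 := ⟨lt_trans hx.1 hy.1, hy.2⟩
  have hg : g x₀ ≤ g y := hm hx hyI (le_of_lt hy.1)
  rw [slope_def_field]
  have : (0 : ℝ) < y - x₀ := by linarith [hy.1]
  exact div_nonneg (by linarith) this.le

end Stmt11Aux

open Stmt11Aux

/-- D is convex on [0,1] iff e ≤ 4p(1-p). -/
theorem stmt11 (p e : ℝ) (hp0 : 0 < p) (hp1 : p < 1 / 2) (he0 : 0 ≤ e) (he1 : e ≤ 1) :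
    ConvexOn ℝ (Set.Icc (0 : ℝ) 1) (fun x => Dfun p e x) ↔ e ≤ 4 * p * (1 - p) := by
  constructor
  · -- convex → e ≤ 4p(1-p)
    intro hconv
    have hIoo : ConvexOn ℝ (Ioo (0 : ℝ) 1) (fun x => Dfun p e x) :=
      hconv.subset Ioo_subset_Icc_self (convex_Ioo 0 1)
    have hdiff : ∀ x ∈ Ioo (0 : ℝ) 1, DifferentiableAt ℝ (fun x => Dfun p e x) x :=
      fun x hx => (hasDerivAt_Dfun hp0 hp1 hx).differentiableAt
    have hmono : MonotoneOn (deriv fun x => Dfun p e x) (Ioo (0 : ℝ) 1) :=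
      hIoo.monotoneOn_deriv hdiff
    have hmono' : MonotoneOn (D1 p e) (Ioo (0 : ℝ) 1) := by
      intro a ha b hb hab
      have := hmono ha hb hab
      rwa [(hasDerivAt_Dfun hp0 hp1 ha).deriv, (hasDerivAt_Dfun hp0 hp1 hb).deriv] at this
    have hhalf : (1 / 2 : ℝ) ∈ Ioo (0 : ℝ) 1 := by norm_num
    have h2 : 0 ≤ D2 p e (1 / 2) :=
      mono_deriv_nonneg hmono' hhalf (hasDerivAt_D1 hp0 hp1 hhalf)
    have hbc : bconv (1 / 2) p = 1 / 2 := by unfold bconv; ring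
    rw [D2, hbc] at h2
    have hl : (0 : ℝ) < (Real.log 2)⁻¹ := inv_pos.2 (Real.log_pos one_lt_two)
    have hC : (0 : ℝ) ≤ (1 - e) * (1 / (1 / 2 * (1 - 1 / 2))) -
        (1 - 2 * p) ^ 2 * (1 / (1 / 2 * (1 - 1 / 2))) := by
      by_contra h
      push_neg at h
      nlinarith [mul_neg_of_pos_of_neg hl h]
    nlinarith [hC]
  · -- e ≤ 4p(1-p) → convex
    intro he4
    have hcont : ContinuousOn (fun x => Dfun p e x) (Icc (0 : ℝ) 1) := by
      have : Continuous fun x => Dfun p e x := by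
        unfold Dfun
        exact ((continuous_binH.comp (by continuity : Continuous fun x => bconv x p)).sub
          (continuous_const.mul continuous_binH)).sub continuous_const
      exact this.continuousOn
    refine convexOn_of_hasDerivWithinAt2_nonneg (convex_Icc 0 1) hcont
      (f' := D1 p e) (f'' := D2 p e) ?_ ?_ ?_
    · intro x hx
      rw [interior_Icc] at hx
      exact (hasDerivAt_Dfun hp0 hp1 hx).hasDerivWithinAt
    · intro x hx
      rw [interior_Icc] at hx
      exact (hasDerivAt_D1 hp0 hp1 hx).hasDerivWithinAt
    · intro x hx
      rw [interior_Icc] at hx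
      exact D2_nonneg hp0 hp1 he0 he1 he4 hx
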